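/- For g ≠ 0 and h ≥ 0, the Tukey g–h transform T_{g,h}(x) = ((exp(g·x) − 1)/g)·exp(h·x²/2) is strictly increasing on ℝ. -/

import Mathlib

open Set Real

lemma exp_sub_one_mul_self_nonneg (t : ℝ) : 0 ≤ (Real.exp t - 1) * t := by
  rcases le_or_gt 0 t with ht | ht
  · exact mul_nonneg (by simpa using Real.one_le_exp ht) ht
  · nlinarith [Real.exp_lt_one_iff.2 ht]

/-- For `g ≠ 0` and `h ≥ 0`, the Tukey `g–h` transform
`T_{g,h}(x) = ((exp(gx) − 1)/g)·exp(hx²/2)` is strictly increasing on `ℝ`. -/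
theorem tukey_gh_transform_strictMono
    (g h : ℝ) (hg : g ≠ 0) (hh : 0 ≤ h) :
    StrictMono (fun x : ℝ => (Real.exp (g * x) - 1) / g * Real.exp (h * x ^ 2 / 2)) := by
  have hderiv : ∀ x : ℝ, HasDerivAt
      (fun x : ℝ => (Real.exp (g * x) - 1) / g * Real.exp (h * x ^ 2 / 2))
      (Real.exp (g * x) * Real.exp (h * x ^ 2 / 2)
        + (Real.exp (g * x) - 1) / g * (Real.exp (h * x ^ 2 / 2) * (h * x))) x := by
    intro x
    have hu : HasDerivAt (fun x : ℝ => (Real.exp (g * x) - 1) / g) (Real.exp (g * x)) x := by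
      have h1 : HasDerivAt (fun x : ℝ => g * x) g x := by
        simpa using (hasDerivAt_id x).const_mul g
      have h2 := (Real.hasDerivAt_exp (g * x)).comp x h1
      have h3 := (h2.sub_const 1).div_const g
      simpa [mul_comm, mul_div_assoc, mul_div_cancel_left₀ _ hg] using h3
    have hv : HasDerivAt (fun x : ℝ => Real.exp (h * x ^ 2 / 2))
        (Real.exp (h * x ^ 2 / 2) * (h * x)) x := by
      have h1 : HasDerivAt (fun x : ℝ => h * x ^ 2 / 2) (h * x) x := by
        have := ((hasDerivAt_pow 2 x).const_mul h).div_const 2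
        exact this.congr_deriv (by ring)
      exact (Real.hasDerivAt_exp (h * x ^ 2 / 2)).comp x h1
    exact hu.mul hv
  apply strictMono_of_deriv_pos
  intro x
  rw [(hderiv x).deriv]
  have hpos : 0 < Real.exp (g * x) * Real.exp (h * x ^ 2 / 2) :=
    mul_pos (Real.exp_pos _) (Real.exp_pos _)
  have hnn : 0 ≤ (Real.exp (g * x) - 1) / g * (Real.exp (h * x ^ 2 / 2) * (h * x)) := by
    have key : 0 ≤ (Real.exp (g * x) - 1) / g * x := by
      have h1 : (Real.exp (g * x) - 1) / g * x = (Real.exp (g * x) - 1) * (g * x) / g ^ 2 := by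
        field_simp
      rw [h1]
      exact div_nonneg (exp_sub_one_mul_self_nonneg (g * x)) (sq_nonneg g)
    have : (Real.exp (g * x) - 1) / g * (Real.exp (h * x ^ 2 / 2) * (h * x))
        = ((Real.exp (g * x) - 1) / g * x) * (h * Real.exp (h * x ^ 2 / 2)) := by ring
    rw [this]
    exact mul_nonneg key (mul_nonneg hh (Real.exp_pos _).le)
  linarith
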